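/- arXiv:1504.04181 — 8 statements merged into one kernel-verified Lean document; each statement's English description precedes it below -/
import Mathlib

section
/- Let U be a nonempty subset of ℕ with 0 ∉ U and 1 ∉ U. Let V be a finite set of variables, T ⊆ V × V × V a set of multiplication atoms, and W ⊆ V a set of unary atoms. Let V' be the least subset of V that contains W and is closed under the two rules: (i) if (x,y,z) ∈ T and z ∈ V' then x ∈ V' and y ∈ V'; (ii) if (x,y,z) ∈ T and x ∈ V' and y ∈ V' then z ∈ V'. Then there exists a satisfying map s : V → ℕ for the instance if and only if there exists a satisfying map s : V → ℕ such that s(v) ≥ 1 for every v ∈ V' and s(v) = 0 for every v ∉ V'. -/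
/-- Preprocessing lemma reducing CSP(ℕ; ×, U) to CSP(ℕ⁺; ×, U).
A CSP instance over (ℕ; ×, U) has variables `V`, multiplication atoms `T` and
unary atoms `W`.  `V'` is the least subset of `V` containing `W` and closed under
the two propagation rules. -/
theorem statement0 (U : Set ℕ) (hUne : U.Nonempty) (hU0 : 0 ∉ U) (hU1 : 1 ∉ U)
    (V : Type) [Fintype V] (T : Set (V × V × V)) (W : Set V)
    (V' : Set V)
    (hW : W ⊆ V')
    (hdown : ∀ x y z : V, (x, y, z) ∈ T → z ∈ V' → x ∈ V' ∧ y ∈ V')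
    (hup : ∀ x y z : V, (x, y, z) ∈ T → x ∈ V' → y ∈ V' → z ∈ V')
    (hleast : ∀ S : Set V, W ⊆ S →
      (∀ x y z : V, (x, y, z) ∈ T → z ∈ S → x ∈ S ∧ y ∈ S) →
      (∀ x y z : V, (x, y, z) ∈ T → x ∈ S → y ∈ S → z ∈ S) →
      V' ⊆ S) :
    (∃ s : V → ℕ,
      (∀ x y z : V, (x, y, z) ∈ T → s x * s y = s z) ∧ (∀ v ∈ W, s v ∈ U)) ↔
    (∃ s : V → ℕ,
      ((∀ x y z : V, (x, y, z) ∈ T → s x * s y = s z) ∧ (∀ v ∈ W, s v ∈ U)) ∧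
      (∀ v ∈ V', 1 ≤ s v) ∧ (∀ v ∉ V', s v = 0)) := by
  constructor
  · rintro ⟨s, hT, hWU⟩
    classical
    have hpos : ∀ v ∈ V', s v ≠ 0 := by
      apply hleast {v | s v ≠ 0}
      · intro v hv hv0
        exact hU0 (hv0 ▸ hWU v hv)
      · intro x y z hxyz hz
        have := hT x y z hxyz
        constructor <;> intro h0 <;> apply hz <;> rw [← this] <;> simp [h0]
      · intro x y z hxyz hx hy h0
        rw [← hT x y z hxyz] at h0
        rcases Nat.mul_eq_zero.mp h0 with h | h
        · exact hx h
        · exact hy h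
    refine ⟨fun v => if v ∈ V' then s v else 0, ⟨?_, ?_⟩, ?_, ?_⟩
    · intro x y z hxyz
      by_cases hz : z ∈ V'
      · obtain ⟨hx, hy⟩ := hdown x y z hxyz hz
        simp [hx, hy, hz, hT x y z hxyz]
      · by_cases hx : x ∈ V'
        · have hy : y ∉ V' := fun hy => hz (hup x y z hxyz hx hy)
          simp [hx, hy, hz]
        · simp [hx, hz]
    · intro v hv
      simp [hW hv]
      exact hWU v hv
    · intro v hv
      simp [hv, Nat.one_le_iff_ne_zero, hpos v hv]
    · intro v hv
      simp [hv]
  · rintro ⟨s, hs, _⟩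
    exact ⟨s, hs⟩
end

section
/- Let m > 1 be an integer and let U ⊆ ℕ satisfy {m^j : j ≥ 1} ⊆ U and U ⊆ ℕ ∖ {0,1}. Let V be a set of variables, T ⊆ V × V × V a set of atoms, and W ⊆ V. Then there exists s : V → ℕ with s(v) ≥ 1 for all v ∈ V, s(x)·s(y) = s(z) for every (x,y,z) ∈ T, and s(v) ∈ U for every v ∈ W, if and only if there exists s' : V → ℕ with s'(x) + s'(y) = s'(z) for every (x,y,z) ∈ T and s'(v) ≥ 1 for every v ∈ W. -/
/-- satisfiability transfer between multiplicative instances over the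
positive integers and additive instances over ℕ, for a set `U` containing all
positive powers of some `m > 1` and contained in ℕ ∖ {0,1}. -/
theorem statement1 (m : ℕ) (hm : 1 < m) (U : Set ℕ)
    (hpow : ∀ j : ℕ, 1 ≤ j → m ^ j ∈ U)
    (hU : ∀ u ∈ U, u ≠ 0 ∧ u ≠ 1)
    (V : Type) (T : Set (V × V × V)) (W : Set V) :
    (∃ s : V → ℕ, (∀ v : V, 1 ≤ s v) ∧
      (∀ x y z : V, (x, y, z) ∈ T → s x * s y = s z) ∧ (∀ v ∈ W, s v ∈ U)) ↔
    (∃ s' : V → ℕ,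
      (∀ x y z : V, (x, y, z) ∈ T → s' x + s' y = s' z) ∧ (∀ v ∈ W, 1 ≤ s' v)) := by
  constructor
  · rintro ⟨s, hpos, hmul, hW⟩
    refine ⟨fun v => ArithmeticFunction.cardFactors (s v), ?_, ?_⟩
    · intro x y z hxyz
      rw [← ArithmeticFunction.cardFactors_mul (Nat.one_le_iff_ne_zero.mp (hpos x))
        (Nat.one_le_iff_ne_zero.mp (hpos y)), hmul x y z hxyz]
    · intro v hv
      obtain ⟨h0, h1⟩ := hU _ (hW v hv)
      simp only [ArithmeticFunction.cardFactors_apply]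
      rw [Nat.one_le_iff_ne_zero, Ne, List.length_eq_zero_iff]
      intro hnil
      rcases (Nat.primeFactorsList_eq_nil _).mp hnil with h | h <;> tauto
  · rintro ⟨s', hadd, hW⟩
    refine ⟨fun v => m ^ s' v, fun v => Nat.one_le_pow _ _ (by omega), ?_, ?_⟩
    · intro x y z hxyz
      rw [← pow_add, hadd x y z hxyz]
    · intro v hv
      exact hpow _ (hW v hv)
end

section
/- Let m > 1 be an integer that has a degree-one factor, i.e., there is a prime p with p ∣ m and p² ∤ m. Then there exists a function e : ℕ → ℕ such that e(1) = 1, e(m) = m, e(d) ∈ {1, m} for every divisor d of m, and e(x)·e(y) = e(z) for all divisors x, y, z of m with x·y = z. -/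
/-- if `m > 1` has a degree-one factor (a prime `p` with `p ∣ m` and
`p² ∤ m`), then there is an endomorphism `e` of the divisor structure of `m`
witnessing that `(Div_m; ×, m)` has a two-element core with universe `{1, m}`. -/
theorem statement3 (m : ℕ) (hm : 1 < m)
    (p : ℕ) (hp : p.Prime) (hpm : p ∣ m) (hp2 : ¬ p ^ 2 ∣ m) :
    ∃ e : ℕ → ℕ, e 1 = 1 ∧ e m = m ∧
      (∀ d : ℕ, d ∣ m → e d = 1 ∨ e d = m) ∧
      (∀ x y z : ℕ, x ∣ m → y ∣ m → z ∣ m → x * y = z → e x * e y = e z) := by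
  refine ⟨fun d => if p ∣ d then m else 1, ?_, ?_, ?_, ?_⟩
  · simp [Nat.dvd_one, hp.one_lt.ne']
  · simp [hpm]
  · intro d _
    by_cases h : p ∣ d <;> simp [h]
  · intro x y z hx hy hz hxyz
    by_cases hpx : p ∣ x <;> by_cases hpy : p ∣ y
    · exfalso
      apply hp2
      calc p ^ 2 = p * p := sq p
      _ ∣ x * y := mul_dvd_mul hpx hpy
      _ ∣ m := hxyz ▸ hz
    · have : p ∣ z := hxyz ▸ hpx.mul_right y
      simp [hpx, hpy, this]
    · have : p ∣ z := hxyz ▸ hpy.mul_left x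
      simp [hpx, hpy, this]
    · have : ¬ p ∣ z := by
        rw [← hxyz]
        intro h
        rcases (Nat.Prime.dvd_mul hp).1 h with h | h <;> tauto
      simp [hpx, hpy, this]
end

section
/- Let m > 1 be an integer with no degree-one factor, i.e., every prime p dividing m satisfies p² ∣ m. Then there is no function e : ℕ → ℕ such that e(m) = m, e(d) ∈ {1, m} for every divisor d of m, and e(x)·e(y) = e(z) for all divisors x, y, z of m with x·y = z. -/
/-- if `m > 1` has no degree-one factor (every prime dividing `m`
divides it at least twice), then `(Div_m; ×, m)` has no two-element core: there
is no map `e` fixing `m`, taking values in `{1, m}` on divisors of `m`, and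
preserving multiplication triples among divisors of `m`. -/
theorem statement4 (m : ℕ) (hm : 1 < m)
    (h : ∀ p : ℕ, p.Prime → p ∣ m → p ^ 2 ∣ m) :
    ¬ ∃ e : ℕ → ℕ, e m = m ∧
      (∀ d : ℕ, d ∣ m → e d = 1 ∨ e d = m) ∧
      (∀ x y z : ℕ, x ∣ m → y ∣ m → z ∣ m → x * y = z → e x * e y = e z) := by
  rintro ⟨e, hem, hval, hmul⟩
  -- e 1 = 1
  have h1 : e 1 = 1 := by
    have := hmul 1 1 1 (one_dvd m) (one_dvd m) (one_dvd m) (by ring)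
    rcases hval 1 (one_dvd m) with h' | h'
    · exact h'
    · rw [h'] at this
      nlinarith
  -- e p = 1 for primes p ∣ m
  have hp1 : ∀ p : ℕ, p.Prime → p ∣ m → e p = 1 := by
    intro p hp hpm
    rcases hval p hpm with h' | h'
    · exact h'
    · exfalso
      have hp2 : p ^ 2 ∣ m := h p hp hpm
      have := hmul p p (p ^ 2) hpm hpm hp2 (by ring)
      rw [h'] at this
      rcases hval (p ^ 2) hp2 with h'' | h'' <;> rw [h''] at this <;> nlinarith
  -- all divisors map to 1 by strong induction
  have hall : ∀ d : ℕ, d ∣ m → e d = 1 := by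
    intro d
    induction d using Nat.strong_induction_on with
    | _ d ih =>
      intro hdm
      have hd0 : d ≠ 0 := by
        rintro rfl
        exact absurd (Nat.eq_zero_of_zero_dvd hdm) (by omega)
      rcases eq_or_ne d 1 with rfl | hd1
      · exact h1
      · have hp : d.minFac.Prime := Nat.minFac_prime hd1
        have hpd : d.minFac ∣ d := Nat.minFac_dvd d
        obtain ⟨k, hk⟩ := hpd
        have hkd : k < d := by
          have h2 : 2 ≤ d.minFac := hp.two_le
          have hk0 : k ≠ 0 := by rintro rfl; simp at hk; exact hd0 hk
          nlinarith [Nat.pos_of_ne_zero hk0]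
        have hkm : k ∣ m := (Dvd.intro_left _ hk.symm).trans hdm
        have hpm : d.minFac ∣ m := (Nat.minFac_dvd d).trans hdm
        have := hmul d.minFac k d hpm hkm hdm hk.symm
        rw [hp1 d.minFac hp hpm, ih k hkd hkm] at this
        omega
  have := hall m dvd_rfl
  rw [hem] at this
  omega
end

section
/- Let m > 1 be an integer such that m ≠ k^n for all integers k, n > 1, let k ≥ 2, and let S be a finite subset of the positive integers with 1 ∈ S and m ∈ S. Let R = {v : {1,…,k} → S | v(1)·v(2)⋯v(k) = m}. Then there is no function t : S^k → S satisfying all of the following: (i) t is idempotent, i.e., t(x,…,x) = x for all x ∈ S; (ii) t satisfies the weak near-unanimity identities, i.e., for all x, y ∈ S and all positions i, j, the value of t on the tuple equal to x in every coordinate except y in coordinate i equals its value on the tuple equal to x in every coordinate except y in coordinate j; (iii) t preserves R, i.e., whenever v₁, …, v_k ∈ R, the tuple whose i-th coordinate is t(v₁(i), …, v_k(i)) also belongs to R. -/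
/-- if `m > 1` is not a perfect power, `k ≥ 2`, and `S` is a finite
set of positive integers containing `1` and `m`, then there is no idempotent weak
near-unanimity operation `t : Sᵏ → S` preserving the relation
`R = {v : Sᵏ | v 1 ⋯ v k = m}`. -/
theorem statement5 (m : ℕ) (hm : 1 < m)
    (hnp : ∀ k n : ℕ, 1 < k → 1 < n → m ≠ k ^ n)
    (k : ℕ) (hk : 2 ≤ k)
    (S : Finset ℕ) (hSpos : ∀ x ∈ S, 0 < x) (h1S : 1 ∈ S) (hmS : m ∈ S) :
    ¬ ∃ t : (Fin k → S) → S,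
      (∀ x : S, t (fun _ => x) = x) ∧
      (∀ x y : S, ∀ i j : Fin k,
        t (Function.update (fun _ => x) i y) = t (Function.update (fun _ => x) j y)) ∧
      (∀ v : Fin k → (Fin k → S), (∀ j : Fin k, ∏ i, (v j i : ℕ) = m) →
        ∏ i, (t (fun j => v j i) : ℕ) = m) := by
  rintro ⟨t, _hid, hwnu, hpres⟩
  have hk0 : 0 < k := by omega
  set one : S := ⟨1, h1S⟩
  set em : S := ⟨m, hmS⟩
  set v : Fin k → (Fin k → S) := fun j => Function.update (fun _ => one) j em with hv
  have hvR : ∀ j : Fin k, ∏ i, (v j i : ℕ) = m := by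
    intro j
    have : ∀ i, (v j i : ℕ) = if i = j then m else 1 := by
      intro i
      simp [hv, Function.update_apply]
      split <;> simp [em, one]
    simp only [this]
    simp
  have key := hpres v hvR
  set a := t (Function.update (fun _ => one) (⟨0, hk0⟩ : Fin k) em) with ha
  have hconst : ∀ i : Fin k, t (fun j => v j i) = a := by
    intro i
    have heq : (fun j => v j i) = Function.update (fun _ => one) i em := by
      funext j
      simp [hv, Function.update_apply]
      rcases eq_or_ne i j with h | h
      · simp [h]
      · simp [h, Ne.symm h]
    rw [heq, ha]
    exact hwnu one em i ⟨0, hk0⟩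
  rw [Finset.prod_congr rfl (fun i _ => by rw [hconst i])] at key
  simp only [Finset.prod_const, Finset.card_univ, Fintype.card_fin] at key
  -- key : (a : ℕ) ^ k = m
  rcases Nat.lt_or_ge (a : ℕ) 2 with h2 | h2
  · have hpos : 0 < (a : ℕ) := hSpos a a.2
    interval_cases h : (a : ℕ) <;> simp_all
  · exact hnp (a : ℕ) k h2 (by omega) key.symm
end

section
/- Let U ⊆ ℕ ∖ {0,1} be nonempty and such that basis(U) is finite and basis(U) ≠ {1}. Then there exist integers r ≥ 1 and k ≥ 0 and exponents a₁, …, a_k with aᵢ > r for all i, such that the set X := {y ∈ ℕ | ∃ z ∈ U, ∃ x₁, …, x_k ∈ ℕ, y^r · x₁^{a₁} ⋯ x_k^{a_k} = z} satisfies basis(X) = {1}; that is, X is nonempty, 0 ∉ X, 1 ∉ X, and minexp(y) = 1 for every y ∈ X. -/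
/-- `minexp x` is the least `j ≥ 1` such that some prime `p` satisfies
`p^j ∣ x` and `p^(j+1) ∤ x`; by convention `minexp 1 = 0` (the set is empty,
and `sInf ∅ = 0`). -/
noncomputable def minexp (x : ℕ) : ℕ :=
  sInf {j : ℕ | 1 ≤ j ∧ ∃ p : ℕ, p.Prime ∧ p ^ j ∣ x ∧ ¬ p ^ (j + 1) ∣ x}

lemma minexp_le {z j : ℕ}
    (h : 1 ≤ j ∧ ∃ p : ℕ, p.Prime ∧ p ^ j ∣ z ∧ ¬ p ^ (j + 1) ∣ z) :
    minexp z ≤ j :=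
  Nat.sInf_le h

lemma minexp_mem {z : ℕ} (hz : 2 ≤ z) :
    1 ≤ minexp z ∧ ∃ p : ℕ, p.Prime ∧ p ^ (minexp z) ∣ z ∧ ¬ p ^ (minexp z + 1) ∣ z := by
  have hz0 : z ≠ 0 := by omega
  have hz1 : z ≠ 1 := by omega
  have hp : z.minFac.Prime := Nat.minFac_prime hz1
  have hne : {j : ℕ | 1 ≤ j ∧ ∃ p : ℕ, p.Prime ∧ p ^ j ∣ z ∧ ¬ p ^ (j + 1) ∣ z}.Nonempty := by
    refine ⟨z.factorization z.minFac, hp.factorization_pos_of_dvd hz0 (Nat.minFac_dvd z),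
      z.minFac, hp, Nat.ordProj_dvd z z.minFac, Nat.pow_succ_factorization_not_dvd hz0 hp⟩
  exact Nat.sInf_mem hne

lemma minexp_eq_one {y p : ℕ} (hp : p.Prime) (h1 : p ∣ y) (h2 : ¬ p ^ 2 ∣ y) :
    minexp y = 1 := by
  have hmem : (1 : ℕ) ∈ {j : ℕ | 1 ≤ j ∧ ∃ p : ℕ, p.Prime ∧ p ^ j ∣ y ∧ ¬ p ^ (j + 1) ∣ y} :=
    ⟨le_refl 1, p, hp, by simpa using h1, by simpa using h2⟩
  have hle : minexp y ≤ 1 := Nat.sInf_le hmem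
  have hmem' := Nat.sInf_mem ⟨1, hmem⟩
  have h1' : 1 ≤ minexp y := hmem'.1
  omega

/-- if `U ⊆ ℕ ∖ {0,1}` is nonempty with finite basis different from
`{1}`, then there are `r ≥ 1`, `k ≥ 0` and exponents `a i > r` such that the set
`X = {y | ∃ z ∈ U, ∃ x₁,…,x_k, y^r · x₁^{a₁} ⋯ x_k^{a_k} = z}` has basis `{1}`:
`X` is nonempty, `0 ∉ X`, `1 ∉ X` and every element of `X` has minimal exponent 1. -/
theorem statement6 (U : Set ℕ) (hUne : U.Nonempty)
    (hU : ∀ u ∈ U, u ≠ 0 ∧ u ≠ 1)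
    (hfin : (minexp '' U).Finite) (hne : minexp '' U ≠ {1}) :
    ∃ r : ℕ, 1 ≤ r ∧ ∃ (k : ℕ) (a : Fin k → ℕ), (∀ i : Fin k, r < a i) ∧
      ∀ X : Set ℕ,
        X = {y : ℕ | ∃ z ∈ U, ∃ x : Fin k → ℕ, y ^ r * ∏ i, x i ^ a i = z} →
        (minexp '' X = {1} ∧
          X.Nonempty ∧ 0 ∉ X ∧ 1 ∉ X ∧ ∀ y ∈ X, minexp y = 1) := by
  have h2 : ∀ z ∈ U, 2 ≤ z := fun z hz => by have := hU z hz; omega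
  have hBne : hfin.toFinset.Nonempty := by
    rw [Set.Finite.toFinset_nonempty]
    exact hUne.image _
  set r := hfin.toFinset.max' hBne with hrdef
  have hrU : r ∈ minexp '' U := by
    have := hfin.toFinset.max'_mem hBne
    rwa [Set.Finite.mem_toFinset] at this
  obtain ⟨z₀, hz₀U, hz₀r⟩ := hrU
  have hle : ∀ z ∈ U, minexp z ≤ r := by
    intro z hz
    apply Finset.le_max'
    rw [Set.Finite.mem_toFinset]
    exact ⟨z, hz, rfl⟩
  have hz₀2 : 2 ≤ z₀ := h2 z₀ hz₀U
  have hz₀0 : z₀ ≠ 0 := by omega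
  have hr1 : 1 ≤ r := hz₀r ▸ (minexp_mem hz₀2).1
  -- all prime exponents of z₀ are ≥ r
  have hvlb : ∀ p ∈ z₀.primeFactors, r ≤ z₀.factorization p := by
    intro p hp
    have hpp : p.Prime := Nat.prime_of_mem_primeFactors hp
    have hpd : p ∣ z₀ := Nat.dvd_of_mem_primeFactors hp
    have := minexp_le (z := z₀) ⟨hpp.factorization_pos_of_dvd hz₀0 hpd,
      p, hpp, Nat.ordProj_dvd z₀ p, Nat.pow_succ_factorization_not_dvd hz₀0 hpp⟩
    omega
  classical
  set F := z₀.primeFactors.filter (fun p => r < z₀.factorization p) with hF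
  set aexp : Fin F.card → ℕ := fun i => z₀.factorization ((F.equivFin.symm i : F) : ℕ) with haexp
  refine ⟨r, hr1, F.card, aexp, ?_, ?_⟩
  · intro i
    exact (Finset.mem_filter.mp (F.equivFin.symm i).2).2
  · intro X hX
    -- key claim: every y ∈ X is nonzero and has a prime dividing it exactly once
    have key : ∀ y ∈ X, y ≠ 0 ∧ ∃ p : ℕ, p.Prime ∧ p ∣ y ∧ ¬ p ^ 2 ∣ y := by
      intro y hy
      rw [hX] at hy
      obtain ⟨z, hzU, x, hxz⟩ := hy
      have hz2 := h2 z hzU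
      have hy0 : y ≠ 0 := by
        rintro rfl
        rw [zero_pow (by omega : r ≠ 0), zero_mul] at hxz
        omega
      refine ⟨hy0, ?_⟩
      by_contra hcon
      push_neg at hcon
      obtain ⟨hm1, p, hp, hpm, hpm1⟩ := minexp_mem hz2
      have hmr : minexp z ≤ r := hle z hzU
      set m := minexp z with hm
      have hpz : p ∣ z := dvd_trans (dvd_pow_self p (by omega : m ≠ 0)) hpm
      by_cases hpy : p ∣ y
      · have h2y : p ^ 2 ∣ y := hcon p hp hpy
        have hdv : p ^ (2 * r) ∣ z := by
          calc p ^ (2 * r) = (p ^ 2) ^ r := by rw [← pow_mul, mul_comm]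
          _ ∣ y ^ r := pow_dvd_pow_of_dvd h2y r
          _ ∣ z := hxz ▸ dvd_mul_right _ _
        exact hpm1 (dvd_trans (pow_dvd_pow p (by omega : m + 1 ≤ 2 * r)) hdv)
      · have hpm' : p ∣ y ^ r * ∏ i, x i ^ aexp i := hxz ▸ hpz
        rcases hp.prime.dvd_mul.mp hpm' with h | h
        · exact hpy (hp.prime.dvd_of_dvd_pow h)
        · obtain ⟨i, _, hi⟩ := hp.prime.exists_mem_finset_dvd h
          have hpxi : p ∣ x i := hp.prime.dvd_of_dvd_pow hi
          have hai : r < aexp i :=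
            (Finset.mem_filter.mp (F.equivFin.symm i).2).2
          have hdv : p ^ aexp i ∣ z := by
            calc p ^ aexp i ∣ (x i) ^ aexp i := pow_dvd_pow_of_dvd hpxi _
            _ ∣ ∏ j, x j ^ aexp j := Finset.dvd_prod_of_mem _ (Finset.mem_univ i)
            _ ∣ z := hxz ▸ dvd_mul_left _ _
          exact hpm1 (dvd_trans (pow_dvd_pow p (by omega : m + 1 ≤ aexp i)) hdv)
    -- the witness y₀
    set T := z₀.primeFactors.filter (fun p => ¬ r < z₀.factorization p) with hT
    set y₀ := ∏ p ∈ T, p with hy₀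
    set x₀ : Fin F.card → ℕ := fun i => ((F.equivFin.symm i : F) : ℕ) with hx₀
    have hprodF : ∏ i, x₀ i ^ aexp i = ∏ p ∈ F, p ^ z₀.factorization p := by
      rw [← Finset.prod_coe_sort F (fun p => p ^ z₀.factorization p)]
      exact Equiv.prod_comp F.equivFin.symm (fun q : F => (q : ℕ) ^ z₀.factorization (q : ℕ))
    have hzprod : ∏ p ∈ z₀.primeFactors, p ^ z₀.factorization p = z₀ := by
      have := Nat.factorization_prod_pow_eq_self hz₀0
      rwa [Finsupp.prod, Nat.support_factorization] at this
    have hy₀X : y₀ ∈ X := by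
      rw [hX]
      refine ⟨z₀, hz₀U, x₀, ?_⟩
      rw [hprodF]
      have h1 : y₀ ^ r = ∏ p ∈ T, p ^ z₀.factorization p := by
        rw [hy₀, ← Finset.prod_pow]
        refine Finset.prod_congr rfl fun p hp => ?_
        rw [hT, Finset.mem_filter] at hp
        have := hvlb p hp.1
        have hpr : z₀.factorization p = r := by omega
        rw [hpr]
      rw [h1, mul_comm]
      exact (Finset.prod_filter_mul_prod_filter_not z₀.primeFactors
        (fun p => r < z₀.factorization p) (fun p => p ^ z₀.factorization p)).trans hzprod
    have hall : ∀ y ∈ X, minexp y = 1 := by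
      intro y hy
      obtain ⟨_, p, hp, hd1, hd2⟩ := key y hy
      exact minexp_eq_one hp hd1 hd2
    refine ⟨?_, ⟨y₀, hy₀X⟩, ?_, ?_, hall⟩
    · ext t
      simp only [Set.mem_image, Set.mem_singleton_iff]
      constructor
      · rintro ⟨y, hy, rfl⟩
        exact hall y hy
      · rintro rfl
        exact ⟨y₀, hy₀X, hall y₀ hy₀X⟩
    · intro h0
      exact (key 0 h0).1 rfl
    · intro h1
      obtain ⟨_, p, hp, hpd, _⟩ := key 1 h1
      exact hp.one_lt.ne' (Nat.dvd_one.mp hpd)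
end

section
/- Work in the power set of ℕ, where for A, B ⊆ ℕ the pointwise product is A·B = {a·b : a ∈ A, b ∈ B} and complements are taken relative to ℕ. Let A = {0,1}. Then the set (((Aᶜ · Aᶜ)ᶜ ∩ {0,1,2}ᶜ) · ({0} ∩ {1})ᶜ)ᶜ equals {2^i : i ∈ ℕ}, the set of all powers of 2. -/
open Pointwise

/-- A prime is not in `({0,1}ᶜ * {0,1}ᶜ)`. -/
lemma prime_notmem_mul {p : ℕ} (hp : p.Prime) :
    p ∉ (({0, 1} : Set ℕ)ᶜ * ({0, 1} : Set ℕ)ᶜ) := by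
  rintro ⟨a, ha, b, hb, hab⟩
  simp only [Set.mem_compl_iff, Set.mem_insert_iff, Set.mem_singleton_iff, not_or] at ha hb
  have h2a : 2 ≤ a := by omega
  have h2b : 2 ≤ b := by omega
  rcases (hp.eq_one_or_self_of_dvd a ⟨b, hab.symm⟩) with h | h
  · omega
  · subst h
    have : b = 1 := by
      have hp0 : a ≠ 0 := by omega
      have := hab
      nlinarith
    omega

/-- with pointwise products of subsets of ℕ and complements relative
to ℕ, for `A = {0,1}` the set `(((Aᶜ · Aᶜ)ᶜ ∩ {0,1,2}ᶜ) · ({0} ∩ {1})ᶜ)ᶜ` is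
exactly the set of powers of two. -/
theorem statement8 :
    (((({0, 1} : Set ℕ)ᶜ * ({0, 1} : Set ℕ)ᶜ)ᶜ ∩ ({0, 1, 2} : Set ℕ)ᶜ) *
        (({0} : Set ℕ) ∩ {1})ᶜ)ᶜ
      = {n : ℕ | ∃ i : ℕ, n = 2 ^ i} := by
  have hcompl : ((({0} : Set ℕ) ∩ {1})ᶜ) = Set.univ := by
    ext x
    simp only [Set.mem_compl_iff, Set.mem_inter_iff, Set.mem_singleton_iff, Set.mem_univ,
      iff_true]
    omega
  ext n
  simp only [Set.mem_compl_iff, Set.mem_setOf_eq, hcompl]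
  constructor
  · intro h
    have hn0 : n ≠ 0 := by
      rintro rfl
      exact h ⟨3, ⟨prime_notmem_mul (by norm_num), by simp⟩, 0, Set.mem_univ 0, by norm_num⟩
    by_contra hpow
    push_neg at hpow
    set m := n / 2 ^ (n.factorization 2) with hm
    have hmdvd : m ∣ n := Nat.div_dvd_of_dvd (Nat.ordProj_dvd n 2)
    have hm0 : m ≠ 0 := Nat.ordCompl_pos 2 hn0 |>.ne'
    have hm1 : m ≠ 1 := by
      intro h1
      apply hpow (n.factorization 2)
      have := Nat.ordProj_mul_ordCompl_eq_self n 2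
      rw [← hm] at this
      rw [h1, mul_one] at this
      exact this.symm
    set p := m.minFac with hpdef
    have hp : p.Prime := Nat.minFac_prime hm1
    have hpm : p ∣ m := Nat.minFac_dvd m
    have hp2 : p ≠ 2 := by
      intro h2
      have : ¬ (2 ∣ m) := Nat.not_dvd_ordCompl Nat.prime_two hn0
      rw [← h2] at this
      exact this hpm
    have hp3 : 3 ≤ p := by
      have := hp.two_le
      omega
    have hpn : p ∣ n := hpm.trans hmdvd
    apply h
    refine ⟨p, ⟨prime_notmem_mul hp, ?_⟩, n / p, Set.mem_univ _, (Nat.mul_div_cancel' hpn)⟩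
    simp only [Set.mem_compl_iff, Set.mem_insert_iff, Set.mem_singleton_iff, not_or]
    omega
  · rintro ⟨i, rfl⟩ ⟨x, ⟨hx1, hx2⟩, y, -, hxy⟩
    simp only [Set.mem_compl_iff, Set.mem_insert_iff, Set.mem_singleton_iff, not_or] at hx2
    have hxdvd : x ∣ 2 ^ i := ⟨y, hxy.symm⟩
    obtain ⟨j, hj, rfl⟩ := (Nat.dvd_prime_pow Nat.prime_two).mp hxdvd
    have hj2 : 2 ≤ j := by
      by_contra hc
      interval_cases j <;> simp_all
    apply hx1
    refine ⟨2, by simp, 2 ^ (j - 1), ?_, ?_⟩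
    · simp only [Set.mem_compl_iff, Set.mem_insert_iff, Set.mem_singleton_iff, not_or]
      have : 2 ≤ 2 ^ (j - 1) := by
        calc 2 = 2 ^ 1 := rfl
        _ ≤ 2 ^ (j - 1) := Nat.pow_le_pow_right (by norm_num) (by omega)
      omega
    · show 2 * 2 ^ (j - 1) = 2 ^ j
      rw [← pow_succ']
      congr 1
      omega
end

section
/- Let n ≥ 1 and consider terms over variables v₁, …, vₙ built from the operations ∪, ∩ and complement, interpreted over subsets of ℕ: for an assignment a : {1,…,n} → ℕ, ⟦vᵢ⟧_a = {a(i)}, ⟦s ∪ t⟧_a = ⟦s⟧_a ∪ ⟦t⟧_a, ⟦s ∩ t⟧_a = ⟦s⟧_a ∩ ⟦t⟧_a, and ⟦t̄⟧_a = ℕ ∖ ⟦t⟧_a. Let (t₁, t'₁), …, (t_m, t'_m) be finitely many pairs of such terms. If there exists an assignment a : {1,…,n} → ℕ with ⟦tⱼ⟧_a = ⟦t'ⱼ⟧_a for all j = 1, …, m, then there exists such an assignment with a(i) ≤ n − 1 for all i. -/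
/-- Terms over variables `v₁, …, vₙ` built from `∪`, `∩` and complement. -/
inductive BTerm (n : ℕ) : Type where
  | var : Fin n → BTerm n
  | union : BTerm n → BTerm n → BTerm n
  | inter : BTerm n → BTerm n → BTerm n
  | compl : BTerm n → BTerm n

/-- Interpretation of a term under an assignment `a : Fin n → ℕ`:
`⟦vᵢ⟧ = {a i}`, `∪`/`∩` are set union/intersection and complement is relative
to ℕ. -/
def BTerm.eval {n : ℕ} (a : Fin n → ℕ) : BTerm n → Set ℕ
  | .var i => {a i}
  | .union s t => BTerm.eval a s ∪ BTerm.eval a t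
  | .inter s t => BTerm.eval a s ∩ BTerm.eval a t
  | .compl t => (BTerm.eval a t)ᶜ

/-- If `g` matches fibers of `b` with fibers of `a`, evaluation transfers. -/
lemma BTerm.eval_transfer {n : ℕ} (a b : Fin n → ℕ) (g : ℕ → ℕ)
    (hg : ∀ i x, a i = g x ↔ b i = x) :
    ∀ (s : BTerm n) (x : ℕ), x ∈ BTerm.eval b s ↔ g x ∈ BTerm.eval a s := by
  intro s
  induction s with
  | var i => intro x; simp [BTerm.eval, eq_comm, hg i x]
  | union s t hs ht => intro x; simp [BTerm.eval, hs x, ht x]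
  | inter s t hs ht => intro x; simp [BTerm.eval, hs x, ht x]
  | compl s hs => intro x; simp [BTerm.eval, hs x]

/-- small-solution property for systems of term equalities over
`{−, ∩, ∪}`: if some assignment satisfies all equalities then some assignment
with values ≤ n − 1 does. -/
theorem statement10 (n : ℕ) (hn : 1 ≤ n) (m : ℕ) (t t' : Fin m → BTerm n)
    (h : ∃ a : Fin n → ℕ, ∀ j : Fin m, BTerm.eval a (t j) = BTerm.eval a (t' j)) :
    ∃ a : Fin n → ℕ, (∀ j : Fin m, BTerm.eval a (t j) = BTerm.eval a (t' j)) ∧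
      ∀ i : Fin n, a i ≤ n - 1 := by
  obtain ⟨a, ha⟩ := h
  set s : Finset ℕ := Finset.image a Finset.univ with hs
  have hmem : ∀ i, a i ∈ s := fun i => Finset.mem_image_of_mem a (Finset.mem_univ i)
  set k := s.card with hk
  have hkn : k ≤ n := by
    calc s.card ≤ (Finset.univ : Finset (Fin n)).card := Finset.card_image_le
    _ = n := by simp
  set e : {x // x ∈ s} ≃ Fin k := s.equivFin with he
  set b : Fin n → ℕ := fun i => (e ⟨a i, hmem i⟩ : ℕ) with hb
  set g : ℕ → ℕ := fun x => if hx : x < k then (e.symm ⟨x, hx⟩ : ℕ) else s.sup id + 1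
    with hgdef
  have hg : ∀ i x, a i = g x ↔ b i = x := by
    intro i x
    by_cases hx : x < k
    · simp only [hgdef, hb, dif_pos hx]
      constructor
      · intro hax
        have : (⟨a i, hmem i⟩ : {y // y ∈ s}) = e.symm ⟨x, hx⟩ := Subtype.ext hax
        rw [this]; simp
      · intro hbx
        have : e ⟨a i, hmem i⟩ = ⟨x, hx⟩ := Fin.ext hbx
        have := congrArg e.symm this
        rw [Equiv.symm_apply_apply] at this
        exact congrArg Subtype.val this
    · simp only [hgdef, hb, dif_neg hx]
      constructor
      · intro hax
        exfalso
        have h1 : a i ≤ s.sup id := Finset.le_sup (f := id) (hmem i)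
        omega
      · intro hbx
        exfalso
        have : (e ⟨a i, hmem i⟩ : ℕ) < k := (e ⟨a i, hmem i⟩).isLt
        omega
  refine ⟨b, ?_, ?_⟩
  · intro j
    ext x
    rw [BTerm.eval_transfer a b g hg (t j) x, BTerm.eval_transfer a b g hg (t' j) x,
      ha j]
  · intro i
    have h1 : b i < k := (e ⟨a i, hmem i⟩).isLt
    omega
end
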